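/- For the ring of six oscillators with nearest and next-nearest neighbour coupling with 2π-periodic coupling function g, the polydiagonal A_6 = {(a, a+π, b, a, a+π, b+π) : a,b ∈ ℝ} is invariant: writing f_i(θ) = ω + Σ_{j : |i−j| ≡ ±1, ±2 (mod 6)} g(θ_i − θ_j), at every point of the form (a, a+π, b, a, a+π, b+π) one has f_4 = f_1, f_5 = f_2, and f_6 = f_3. -/

import Mathlib

/-- For the ring of six oscillators with nearest and next-nearest neighbour coupling and
`2π`-periodic `g`, the polydiagonal `A₆ = {(a, a+π, b, a, a+π, b+π)}` is invariant: at
every point of this form the vector field satisfies `f₄ = f₁`, `f₅ = f₂`, `f₆ = f₃`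
(0-indexed: `f 3 = f 0`, `f 4 = f 1`, `f 5 = f 2`). -/
theorem ring_of_six_A6_invariant
    (ω : ℝ) (g : ℝ → ℝ) (hper : Function.Periodic g (2 * Real.pi))
    (f : (Fin 6 → ℝ) → Fin 6 → ℝ)
    (hf : ∀ (θ : Fin 6 → ℝ) (i : Fin 6),
      f θ i = ω + (g (θ i - θ (i + 1)) + g (θ i - θ (i - 1))
        + g (θ i - θ (i + 2)) + g (θ i - θ (i - 2))))
    (a b : ℝ) :
    f ![a, a + Real.pi, b, a, a + Real.pi, b + Real.pi] 3 =
      f ![a, a + Real.pi, b, a, a + Real.pi, b + Real.pi] 0 ∧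
    f ![a, a + Real.pi, b, a, a + Real.pi, b + Real.pi] 4 =
      f ![a, a + Real.pi, b, a, a + Real.pi, b + Real.pi] 1 ∧
    f ![a, a + Real.pi, b, a, a + Real.pi, b + Real.pi] 5 =
      f ![a, a + Real.pi, b, a, a + Real.pi, b + Real.pi] 2 := by
  have key : g (b - a + Real.pi) = g (b - a - Real.pi) := by
    have := hper (b - a - Real.pi)
    rw [show b - a - Real.pi + 2 * Real.pi = b - a + Real.pi by ring] at this
    exact this
  have e0 : (![a, a + Real.pi, b, a, a + Real.pi, b + Real.pi] : Fin 6 → ℝ) 0 = a := rfl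
  have e1 : (![a, a + Real.pi, b, a, a + Real.pi, b + Real.pi] : Fin 6 → ℝ) 1 = a + Real.pi := rfl
  have e2 : (![a, a + Real.pi, b, a, a + Real.pi, b + Real.pi] : Fin 6 → ℝ) 2 = b := rfl
  have e3 : (![a, a + Real.pi, b, a, a + Real.pi, b + Real.pi] : Fin 6 → ℝ) 3 = a := rfl
  have e4 : (![a, a + Real.pi, b, a, a + Real.pi, b + Real.pi] : Fin 6 → ℝ) 4 = a + Real.pi := rfl
  have e5 : (![a, a + Real.pi, b, a, a + Real.pi, b + Real.pi] : Fin 6 → ℝ) 5 = b + Real.pi := rfl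
  refine ⟨?_, ?_, ?_⟩ <;>
    simp only [hf, show (3 : Fin 6) + 1 = 4 from rfl, show (3 : Fin 6) - 1 = 2 from rfl,
      show (3 : Fin 6) + 2 = 5 from rfl, show (3 : Fin 6) - 2 = 1 from rfl,
      show (0 : Fin 6) + 1 = 1 from rfl, show (0 : Fin 6) - 1 = 5 from rfl,
      show (0 : Fin 6) + 2 = 2 from rfl, show (0 : Fin 6) - 2 = 4 from rfl,
      show (4 : Fin 6) + 1 = 5 from rfl, show (4 : Fin 6) - 1 = 3 from rfl,
      show (4 : Fin 6) + 2 = 0 from rfl, show (4 : Fin 6) - 2 = 2 from rfl,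
      show (1 : Fin 6) + 1 = 2 from rfl, show (1 : Fin 6) - 1 = 0 from rfl,
      show (1 : Fin 6) + 2 = 3 from rfl, show (1 : Fin 6) - 2 = 5 from rfl,
      show (5 : Fin 6) + 1 = 0 from rfl, show (5 : Fin 6) - 1 = 4 from rfl,
      show (5 : Fin 6) + 2 = 1 from rfl, show (5 : Fin 6) - 2 = 3 from rfl,
      show (2 : Fin 6) + 1 = 3 from rfl, show (2 : Fin 6) - 1 = 1 from rfl,
      show (2 : Fin 6) + 2 = 4 from rfl, show (2 : Fin 6) - 2 = 0 from rfl,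
      e0, e1, e2, e3, e4, e5]
  · ring_nf
  · ring_nf
  · ring_nf
    rw [show b + Real.pi - a = b - a + Real.pi by ring,
      show b - Real.pi - a = b - a - Real.pi by ring, key]
    ring
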